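/- The output Y = (Y_1,…,Y_n) of the sequential privacy mechanism is statistically independent of the sensitive values X_K; equivalently, the joint probability mass function of (X_K, Y) factorizes as the product of its marginals, i.e., the mutual information I(X_K; Y) equals zero. -/
import Mathlib


open Finset
open scoped Classical

noncomputable section

namespace GenotypeHiding

variable {X : Type} [Fintype X] [DecidableEq X]

/-- Restriction of a sequence `x` to the sensitive positions `K`. -/
def restr {n : ℕ} (K : Finset (Fin n)) (x : Fin n → X) : ↥K → X := fun i => x (i : Fin n)

/-- `y` agrees with the history `h` on all coordinates `j` with `j < t`
(i.e. the event `Y_{[t]} = h_{[t]}`, zero-based). -/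
def agreeN {n : ℕ} (t : ℕ) (y h : Fin n → Option X) : Prop :=
  ∀ j : Fin n, (j : ℕ) < t → y j = h j

/-- `P(X = x, Y_{[t]} = h_{[t]})` under the joint law `J` of `(X, Y)`. -/
def prXH {n : ℕ} (J : (Fin n → X) → (Fin n → Option X) → ℝ) (t : ℕ)
    (x : Fin n → X) (h : Fin n → Option X) : ℝ :=
  ∑ y : Fin n → Option X, if agreeN t y h then J x y else 0

/-- `P(Y_i = b, X = x, Y_{[t]} = h_{[t]})` under the joint law `J`. -/
def prXHY {n : ℕ} (J : (Fin n → X) → (Fin n → Option X) → ℝ) (t : ℕ)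
    (x : Fin n → X) (h : Fin n → Option X) (i : Fin n) (b : Option X) : ℝ :=
  ∑ y : Fin n → Option X, if y i = b ∧ agreeN t y h then J x y else 0

/-- `P(Y_{[t]} = h_{[t]})` under the joint law `J`. -/
def prH {n : ℕ} (J : (Fin n → X) → (Fin n → Option X) → ℝ) (t : ℕ)
    (h : Fin n → Option X) : ℝ :=
  ∑ x : Fin n → X, prXH J t x h

/-- `P(X_K = u, Y_{[t]} = h_{[t]})` under the joint law `J`. -/
def prKH {n : ℕ} (J : (Fin n → X) → (Fin n → Option X) → ℝ) (K : Finset (Fin n))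
    (t : ℕ) (u : ↥K → X) (h : Fin n → Option X) : ℝ :=
  ∑ x : Fin n → X, ∑ y : Fin n → Option X,
    if restr K x = u ∧ agreeN t y h then J x y else 0

/-- `P(X_i = a, X_K = u, Y_{[t]} = h_{[t]})` under the joint law `J`. -/
def prIKH {n : ℕ} (J : (Fin n → X) → (Fin n → Option X) → ℝ) (K : Finset (Fin n))
    (t : ℕ) (i : Fin n) (a : X) (u : ↥K → X) (h : Fin n → Option X) : ℝ :=
  ∑ x : Fin n → X, ∑ y : Fin n → Option X,
    if x i = a ∧ restr K x = u ∧ agreeN t y h then J x y else 0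

/-- `P(Y_i = b, X_K = u, Y_{[t]} = h_{[t]})` under the joint law `J`. -/
def prYKH {n : ℕ} (J : (Fin n → X) → (Fin n → Option X) → ℝ) (K : Finset (Fin n))
    (t : ℕ) (i : Fin n) (b : Option X) (u : ↥K → X) (h : Fin n → Option X) : ℝ :=
  ∑ x : Fin n → X, ∑ y : Fin n → Option X,
    if y i = b ∧ restr K x = u ∧ agreeN t y h then J x y else 0

/-- `P(X_i = a | X_K = u, Y_{[t]} = h_{[t]})` under the joint law `J`. -/
def condX {n : ℕ} (J : (Fin n → X) → (Fin n → Option X) → ℝ) (K : Finset (Fin n))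
    (t : ℕ) (i : Fin n) (a : X) (u : ↥K → X) (h : Fin n → Option X) : ℝ :=
  prIKH J K t i a u h / prKH J K t u h

/-- `min_u P(X_i = a | X_K = u, Y_{[t]} = h_{[t]})`, the minimum being over all `u` with
`P(X_K = u, Y_{[t]} = h_{[t]}) > 0`. -/
def minC {n : ℕ} (J : (Fin n → X) → (Fin n → Option X) → ℝ) (K : Finset (Fin n))
    (t : ℕ) (i : Fin n) (a : X) (h : Fin n → Option X) : ℝ :=
  sInf {r : ℝ | ∃ u : ↥K → X, 0 < prKH J K t u h ∧ r = condX J K t i a u h}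

/-- `J` is the joint law of `(X, Y)` where `Y` is generated from `X ∼ p` by the sequential
privacy mechanism: `Y_i ∈ {X_i, ∗}`, and conditionally on `X = x` and the previously
generated outputs `Y_{[i-1]} = y_{[i-1]}`, the mechanism releases `Y_i = x_i` with
probability `min_u P(X_i = x_i | X_K = u, Y_{[i-1]}) / P(X_i = x_i | X_K = x_K, Y_{[i-1]})`,
and erases (`Y_i = ∗`) with the complementary probability. -/
def IsSequentialMechanism {n : ℕ} (p : (Fin n → X) → ℝ) (K : Finset (Fin n))
    (J : (Fin n → X) → (Fin n → Option X) → ℝ) : Prop :=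
  (∀ x y, 0 ≤ J x y) ∧
  (∀ x, ∑ y : Fin n → Option X, J x y = p x) ∧
  (∀ x y, 0 < J x y → ∀ i : Fin n, y i = some (x i) ∨ y i = none) ∧
  (∀ (i : Fin n) (x : Fin n → X) (h : Fin n → Option X), 0 < prXH J (i : ℕ) x h →
    prXHY J (i : ℕ) x h i (some (x i))
      = (minC J K (i : ℕ) i (x i) h / condX J K (i : ℕ) i (x i) (restr K x) h)
          * prXH J (i : ℕ) x h)


section Aux

variable {n : ℕ} {p : (Fin n → X) → ℝ} {K : Finset (Fin n)}
variable {J : (Fin n → X) → (Fin n → Option X) → ℝ}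

lemma agreeN_zero (y h : Fin n → Option X) : agreeN 0 y h :=
  fun _ hj => absurd hj (Nat.not_lt_zero _)

lemma agreeN_top (y h : Fin n → Option X) : agreeN n y h ↔ y = h := by
  constructor
  · intro H; funext j; exact H j j.isLt
  · rintro rfl j _; rfl

lemma agreeN_succ {t : ℕ} (ht : t < n) (y h : Fin n → Option X) :
    agreeN (t + 1) y h ↔ y ⟨t, ht⟩ = h ⟨t, ht⟩ ∧ agreeN t y h := by
  constructor
  · intro H
    exact ⟨H ⟨t, ht⟩ (Nat.lt_succ_self t), fun j hj => H j (Nat.lt_succ_of_lt hj)⟩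
  · rintro ⟨He, H⟩ j hj
    rcases Nat.lt_succ_iff_lt_or_eq.mp hj with h' | h'
    · exact H j h'
    · have hje : j = ⟨t, ht⟩ := Fin.ext h'
      rw [hje]; exact He

lemma prXH_nonneg (hJ0 : ∀ x y, 0 ≤ J x y) (t : ℕ) (x : Fin n → X)
    (h : Fin n → Option X) : 0 ≤ prXH J t x h :=
  Finset.sum_nonneg fun y _ => by split_ifs; exacts [hJ0 x y, le_refl 0]

lemma prXHY_nonneg (hJ0 : ∀ x y, 0 ≤ J x y) (t : ℕ) (x : Fin n → X)
    (h : Fin n → Option X) (i : Fin n) (b : Option X) : 0 ≤ prXHY J t x h i b :=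
  Finset.sum_nonneg fun y _ => by split_ifs; exacts [hJ0 x y, le_refl 0]

lemma prXHY_le_prXH (hJ0 : ∀ x y, 0 ≤ J x y) (t : ℕ) (x : Fin n → X)
    (h : Fin n → Option X) (i : Fin n) (b : Option X) :
    prXHY J t x h i b ≤ prXH J t x h := by
  refine Finset.sum_le_sum fun y _ => ?_

  by_cases hc : y i = b ∧ agreeN t y h
  · rw [if_pos hc, if_pos hc.2]
  · rw [if_neg hc]
    split_ifs; exacts [hJ0 x y, le_refl 0]

lemma prKH_eq (t : ℕ) (u : ↥K → X) (h : Fin n → Option X) :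
    prKH J K t u h = ∑ x : Fin n → X, if restr K x = u then prXH J t x h else 0 := by
  unfold prKH prXH
  refine Finset.sum_congr rfl fun x _ => ?_
  by_cases hr : restr K x = u
  · rw [if_pos hr]
    exact Finset.sum_congr rfl fun y _ => by simp [hr]
  · rw [if_neg hr]
    exact Finset.sum_eq_zero fun y _ => by simp [hr]

lemma prIKH_eq (t : ℕ) (i : Fin n) (a : X) (u : ↥K → X) (h : Fin n → Option X) :
    prIKH J K t i a u h
      = ∑ x : Fin n → X, if x i = a ∧ restr K x = u then prXH J t x h else 0 := by
  unfold prIKH prXH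
  refine Finset.sum_congr rfl fun x _ => ?_
  by_cases hr : x i = a ∧ restr K x = u
  · rw [if_pos hr]
    exact Finset.sum_congr rfl fun y _ => by simp [hr.1, hr.2]
  · rw [if_neg hr]
    refine Finset.sum_eq_zero fun y _ => ?_
    rw [if_neg]
    rintro ⟨h1, h2, _⟩
    exact hr ⟨h1, h2⟩

lemma prKH_nonneg (hJ0 : ∀ x y, 0 ≤ J x y) (t : ℕ) (u : ↥K → X)
    (h : Fin n → Option X) : 0 ≤ prKH J K t u h := by
  rw [prKH_eq]
  refine Finset.sum_nonneg fun x _ => ?_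
  split_ifs; exacts [prXH_nonneg hJ0 t x h, le_refl 0]

lemma prIKH_nonneg (hJ0 : ∀ x y, 0 ≤ J x y) (t : ℕ) (i : Fin n) (a : X)
    (u : ↥K → X) (h : Fin n → Option X) : 0 ≤ prIKH J K t i a u h := by
  rw [prIKH_eq]
  refine Finset.sum_nonneg fun x _ => ?_
  split_ifs; exacts [prXH_nonneg hJ0 t x h, le_refl 0]

lemma prIKH_le_prKH (hJ0 : ∀ x y, 0 ≤ J x y) (t : ℕ) (i : Fin n) (a : X)
    (u : ↥K → X) (h : Fin n → Option X) : prIKH J K t i a u h ≤ prKH J K t u h := by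
  rw [prIKH_eq, prKH_eq]
  refine Finset.sum_le_sum fun x _ => ?_
  by_cases hc : x i = a ∧ restr K x = u
  · rw [if_pos hc, if_pos hc.2]
  · rw [if_neg hc]
    split_ifs; exacts [prXH_nonneg hJ0 t x h, le_refl 0]

lemma condX_nonneg (hJ0 : ∀ x y, 0 ≤ J x y) (t : ℕ) (i : Fin n) (a : X)
    (u : ↥K → X) (h : Fin n → Option X) : 0 ≤ condX J K t i a u h :=
  div_nonneg (prIKH_nonneg hJ0 t i a u h) (prKH_nonneg hJ0 t u h)

lemma minC_eq_zero (hJ0 : ∀ x y, 0 ≤ J x y) {t : ℕ} {i : Fin n} {a : X}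
    {u : ↥K → X} {h : Fin n → Option X} (hK : 0 < prKH J K t u h)
    (hc : condX J K t i a u h = 0) : minC J K t i a h = 0 := by
  have hmem : (0 : ℝ) ∈ {r : ℝ | ∃ u' : ↥K → X,
      0 < prKH J K t u' h ∧ r = condX J K t i a u' h} := ⟨u, hK, hc.symm⟩
  have hlb : ∀ r ∈ {r : ℝ | ∃ u' : ↥K → X,
      0 < prKH J K t u' h ∧ r = condX J K t i a u' h}, (0 : ℝ) ≤ r := by
    rintro r ⟨u', _, rfl⟩
    exact condX_nonneg hJ0 t i a u' h
  exact le_antisymm (csInf_le ⟨0, hlb⟩ hmem) (le_csInf ⟨0, hmem⟩ hlb)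

/-- If `x i ≠ a` then `P(Y_i = some a, X = x, Y_{[t]} = h) = 0`. -/
lemma prXHY_some_ne (hJ : IsSequentialMechanism p K J) {t : ℕ} (i : Fin n)
    (x : Fin n → X) (h : Fin n → Option X) {a : X} (hxa : x i ≠ a) :
    prXHY J t x h i (some a) = 0 := by
  refine Finset.sum_eq_zero fun y _ => ?_
  split_ifs with hc
  · rcases (hJ.1 x y).lt_or_eq with hpos | he
    · rcases hJ.2.2.1 x y hpos i with h1 | h1
      · rw [hc.1] at h1
        exact absurd (Option.some.inj h1).symm hxa
      · rw [hc.1] at h1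
        cases h1
    · exact he.symm
  · rfl

/-- `P(X = x, Y_{[t]} = h)` splits according to the value of `Y_i`. -/
lemma prXH_split (hJ : IsSequentialMechanism p K J) (t : ℕ) (i : Fin n)
    (x : Fin n → X) (h : Fin n → Option X) :
    prXH J t x h = prXHY J t x h i (some (x i)) + prXHY J t x h i none := by
  unfold prXH prXHY
  rw [← Finset.sum_add_distrib]
  refine Finset.sum_congr rfl fun y _ => ?_
  rcases (hJ.1 x y).lt_or_eq with hpos | hz
  · rcases hJ.2.2.1 x y hpos i with h1 | h1 <;>
      by_cases ha : agreeN t y h <;> simp [h1, ha]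
  · simp [← hz]

lemma sum_prXHY_some (hJ : IsSequentialMechanism p K J) {t : ℕ} (i : Fin n)
    (h : Fin n → Option X) (u : ↥K → X) (a : X) (hit : (i : ℕ) = t) :
    (∑ x : Fin n → X, if restr K x = u then prXHY J t x h i (some a) else 0)
      = minC J K t i a h * prKH J K t u h := by
  subst hit
  have hfact : ∀ x : Fin n → X, restr K x = u → x i = a →
      prXHY J (i : ℕ) x h i (some a)
        = (minC J K (i : ℕ) i a h / condX J K (i : ℕ) i a u h)
            * prXH J (i : ℕ) x h := by
    intro x hru hxa
    rcases (prXH_nonneg hJ.1 (i : ℕ) x h).lt_or_eq with hpos | hz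
    · have hm := hJ.2.2.2 i x h hpos
      rw [hxa, hru] at hm
      exact hm
    · have h1 : prXHY J (i : ℕ) x h i (some a) = 0 :=
        le_antisymm (hz ▸ prXHY_le_prXH hJ.1 (i : ℕ) x h i (some a))
          (prXHY_nonneg hJ.1 (i : ℕ) x h i (some a))
      rw [h1, ← hz, mul_zero]
  have hsum : (∑ x : Fin n → X, if restr K x = u then prXHY J (i : ℕ) x h i (some a) else 0)
      = (minC J K (i : ℕ) i a h / condX J K (i : ℕ) i a u h)
          * prIKH J K (i : ℕ) i a u h := by
    rw [prIKH_eq, Finset.mul_sum]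
    refine Finset.sum_congr rfl fun x _ => ?_
    by_cases hxa : x i = a
    · by_cases hru : restr K x = u
      · simp [hxa, hru, hfact x hru hxa]
      · simp [hru]
    · simp [hxa, prXHY_some_ne hJ i x h hxa]
  rcases (prKH_nonneg hJ.1 (i : ℕ) u h).lt_or_eq with hK | hK
  · rcases (prIKH_nonneg hJ.1 (i : ℕ) i a u h).lt_or_eq with hI | hI
    · rw [hsum]
      unfold condX
      rw [div_div_eq_mul_div, div_mul_cancel₀ _ (ne_of_gt hI)]
    · have hcond : condX J K (i : ℕ) i a u h = 0 := by
        unfold condX; rw [← hI, zero_div]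
      have hmin : minC J K (i : ℕ) i a h = 0 := minC_eq_zero hJ.1 hK hcond
      rw [hsum, ← hI, mul_zero, hmin, zero_mul]
  · have hI : prIKH J K (i : ℕ) i a u h = 0 :=
      le_antisymm (hK ▸ prIKH_le_prKH hJ.1 (i : ℕ) i a u h)
        (prIKH_nonneg hJ.1 (i : ℕ) i a u h)
    rw [hsum, hI, mul_zero, ← hK, mul_zero]

lemma sum_prXHY_none (hJ : IsSequentialMechanism p K J) {t : ℕ} (i : Fin n)
    (h : Fin n → Option X) (u : ↥K → X) (hit : (i : ℕ) = t) :
    (∑ x : Fin n → X, if restr K x = u then prXHY J t x h i none else 0)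
      = (1 - ∑ a : X, minC J K t i a h) * prKH J K t u h := by
  have hterm : ∀ x : Fin n → X,
      (if restr K x = u then prXHY J t x h i none else 0)
        = (if restr K x = u then prXH J t x h else 0)
          - (if restr K x = u then prXHY J t x h i (some (x i)) else 0) := by
    intro x
    split_ifs with hr
    · rw [prXH_split hJ t i x h]; ring
    · ring
  rw [Finset.sum_congr rfl fun x _ => hterm x, Finset.sum_sub_distrib]
  have hsome : (∑ x : Fin n → X, if restr K x = u then prXHY J t x h i (some (x i)) else 0)
      = (∑ a : X, minC J K t i a h) * prKH J K t u h := by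
    have hexp : ∀ x : Fin n → X,
        (if restr K x = u then prXHY J t x h i (some (x i)) else 0)
          = ∑ a : X, (if restr K x = u then prXHY J t x h i (some a) else 0) := by
      intro x
      by_cases hr : restr K x = u
      · rw [if_pos hr,
          Finset.sum_eq_single (x i)
            (fun a _ ha => by rw [if_pos hr, prXHY_some_ne hJ i x h (Ne.symm ha)])
            (fun hmem => absurd (Finset.mem_univ _) hmem),
          if_pos hr]
      · rw [if_neg hr]
        exact (Finset.sum_eq_zero fun a _ => if_neg hr).symm
    rw [Finset.sum_congr rfl fun x _ => hexp x, Finset.sum_comm, Finset.sum_mul]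
    exact Finset.sum_congr rfl fun a _ => sum_prXHY_some hJ i h u a hit
  rw [← prKH_eq, hsome]
  ring

lemma prKH_succ_eq (t : ℕ) (ht : t < n) (u : ↥K → X) (h : Fin n → Option X) :
    prKH J K (t + 1) u h
      = ∑ x : Fin n → X,
          if restr K x = u then prXHY J t x h ⟨t, ht⟩ (h ⟨t, ht⟩) else 0 := by
  unfold prKH prXHY
  refine Finset.sum_congr rfl fun x _ => ?_
  by_cases hr : restr K x = u
  · rw [if_pos hr]
    refine Finset.sum_congr rfl fun y _ => ?_
    simp only [agreeN_succ ht, hr, true_and]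
  · rw [if_neg hr]
    refine Finset.sum_eq_zero fun y _ => ?_
    rw [if_neg]
    rintro ⟨h1, _⟩
    exact hr h1

lemma prKH_step (hJ : IsSequentialMechanism p K J) {t : ℕ} (ht : t < n)
    (h : Fin n → Option X) :
    ∃ c : ℝ, ∀ u : ↥K → X, prKH J K (t + 1) u h = c * prKH J K t u h := by
  cases hhi : h ⟨t, ht⟩ with
  | some a =>
      refine ⟨minC J K t ⟨t, ht⟩ a h, fun u => ?_⟩
      rw [prKH_succ_eq t ht u h, hhi]
      exact sum_prXHY_some hJ ⟨t, ht⟩ h u a rfl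
  | none =>
      refine ⟨1 - ∑ a : X, minC J K t ⟨t, ht⟩ a h, fun u => ?_⟩
      rw [prKH_succ_eq t ht u h, hhi]
      exact sum_prXHY_none hJ ⟨t, ht⟩ h u rfl

lemma sum_prKH (t : ℕ) (h : Fin n → Option X) :
    ∑ u : ↥K → X, prKH J K t u h = prH J t h := by
  unfold prH prKH prXH
  rw [Finset.sum_comm]
  refine Finset.sum_congr rfl fun x _ => ?_
  rw [Finset.sum_comm]
  refine Finset.sum_congr rfl fun y _ => ?_
  by_cases ha : agreeN t y h
  · simp [ha, Finset.sum_ite_eq]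
  · simp [ha]

lemma prKH_factor (hJ : IsSequentialMechanism p K J)
    (hp1 : ∑ x : Fin n → X, p x = 1) :
    ∀ t : ℕ, t ≤ n → ∀ (u : ↥K → X) (h : Fin n → Option X),
      prKH J K t u h
        = (∑ x : Fin n → X, if restr K x = u then p x else 0) * prH J t h := by
  intro t
  induction t with
  | zero =>
      intro _ u h
      have h1 : prKH J K 0 u h = ∑ x : Fin n → X, if restr K x = u then p x else 0 := by
        unfold prKH
        refine Finset.sum_congr rfl fun x _ => ?_
        by_cases hr : restr K x = u
        · rw [if_pos hr]
          rw [show (∑ y : Fin n → Option X,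
              if restr K x = u ∧ agreeN 0 y h then J x y else 0)
              = ∑ y : Fin n → Option X, J x y from
            Finset.sum_congr rfl fun y _ => if_pos ⟨hr, agreeN_zero y h⟩]
          exact hJ.2.1 x
        · rw [if_neg hr]
          exact Finset.sum_eq_zero fun y _ => if_neg fun hc => hr hc.1
      have h2 : prH J 0 h = 1 := by
        unfold prH prXH
        rw [show (∑ x : Fin n → X, ∑ y : Fin n → Option X,
            if agreeN 0 y h then J x y else 0)
            = ∑ x : Fin n → X, p x from
          Finset.sum_congr rfl fun x _ => by
            rw [Finset.sum_congr rfl fun y _ => if_pos (agreeN_zero y h)]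
            exact hJ.2.1 x]
        exact hp1
      rw [h1, h2, mul_one]
  | succ t ih =>
      intro hle u h
      have ht : t < n := Nat.lt_of_succ_le hle
      obtain ⟨c, hc⟩ := prKH_step hJ ht h
      have hH : prH J (t + 1) h = c * prH J t h := by
        rw [← sum_prKH (t + 1) h, ← sum_prKH t h, Finset.mul_sum]
        exact Finset.sum_congr rfl fun u' _ => hc u'
      rw [hc u, hH, ih (Nat.le_of_lt ht) u h]
      ring

end Aux

/-- the output `Y` of the sequential privacy mechanism is statistically
independent of the sensitive values `X_K`: the joint probability mass function of
`(X_K, Y)` factorizes as the product of its marginals (equivalently, `I(X_K; Y) = 0`). -/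
theorem sequentialMechanism_private {n : ℕ} (hn : 1 ≤ n) (hX : 2 ≤ Fintype.card X)
    (p : (Fin n → X) → ℝ) (hp0 : ∀ x, 0 ≤ p x) (hp1 : ∑ x : Fin n → X, p x = 1)
    (K : Finset (Fin n))
    (J : (Fin n → X) → (Fin n → Option X) → ℝ)
    (hJ : IsSequentialMechanism p K J) :
    ∀ (u : ↥K → X) (y : Fin n → Option X),
      (∑ x : Fin n → X, if restr K x = u then J x y else 0)
        = (∑ x : Fin n → X, if restr K x = u then p x else 0)
            * (∑ x : Fin n → X, J x y) := by
  intro u y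
  have h1 : prKH J K n u y = ∑ x : Fin n → X, if restr K x = u then J x y else 0 := by
    unfold prKH
    refine Finset.sum_congr rfl fun x _ => ?_
    by_cases hr : restr K x = u
    · rw [if_pos hr]
      rw [show (∑ y' : Fin n → Option X,
          if restr K x = u ∧ agreeN n y' y then J x y' else 0)
          = ∑ y' : Fin n → Option X, if y' = y then J x y' else 0 from
        Finset.sum_congr rfl fun y' _ => by
          simp only [hr, true_and, agreeN_top]]
      simp [Finset.sum_ite_eq']
    · rw [if_neg hr]
      exact Finset.sum_eq_zero fun y' _ => if_neg fun hc => hr hc.1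
  have h2 : prH J n y = ∑ x : Fin n → X, J x y := by
    unfold prH prXH
    refine Finset.sum_congr rfl fun x _ => ?_
    rw [show (∑ y' : Fin n → Option X, if agreeN n y' y then J x y' else 0)
        = ∑ y' : Fin n → Option X, if y' = y then J x y' else 0 from
      Finset.sum_congr rfl fun y' _ => by simp only [agreeN_top]]
    simp [Finset.sum_ite_eq']
  have := prKH_factor hJ hp1 n le_rfl u y
  rw [h1, h2] at this
  exact this

end GenotypeHiding
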